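/- arXiv:2209.09190 — 2 statements merged into one kernel-verified Lean document; each statement's English description precedes it below -/
import Mathlib

section
/- Fix n ∈ ℕ, τ > 0, and σ > 0. Let (X_p)_{p≥1} be a sequence of real matrices, X_p of size n×p, such that p^{-1} X_p X_pᵀ → τ² I_n entrywise as p → ∞, and let (ν_p)_{p≥1} be positive reals with p ν_p² → ∞ as p → ∞. Let H^{(p)} = X_p (X_pᵀ X_p + σ² ν_p^{-2} I_p)^{-1} X_pᵀ. Then H^{(p)} → I_n entrywise as p → ∞; in particular H^{(p)}_{ii} → 1 for each i ∈ {1,…,n}. -/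
open Matrix Filter Topology

lemma smul_one_posDef {m : Type*} [Fintype m] [DecidableEq m] {l : ℝ} (hl : 0 < l) :
    (l • (1 : Matrix m m ℝ)).PosDef := by
  rw [smul_one_eq_diagonal]
  exact .diagonal fun _ => hl

lemma pushthrough {n p : ℕ} (X : Matrix (Fin n) (Fin p) ℝ) {l : ℝ} (hl : 0 < l) :
    X * (Xᵀ * X + l • (1 : Matrix (Fin p) (Fin p) ℝ))⁻¹ * Xᵀ
      = (X * Xᵀ + l • (1 : Matrix (Fin n) (Fin n) ℝ))⁻¹ * (X * Xᵀ) := by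
  have hXt : Xᵀ = Xᴴ := by
    ext i j; simp [Matrix.conjTranspose_apply]
  have hA : (Xᵀ * X + l • (1 : Matrix (Fin p) (Fin p) ℝ)).PosDef := by
    rw [hXt]
    exact Matrix.PosDef.posSemidef_add (Matrix.posSemidef_conjTranspose_mul_self X)
      (smul_one_posDef hl)
  have hB : (X * Xᵀ + l • (1 : Matrix (Fin n) (Fin n) ℝ)).PosDef := by
    rw [hXt]
    exact Matrix.PosDef.posSemidef_add (Matrix.posSemidef_self_mul_conjTranspose X)
      (smul_one_posDef hl)
  have hAd : IsUnit (Xᵀ * X + l • (1 : Matrix (Fin p) (Fin p) ℝ)).det :=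
    (Matrix.isUnit_iff_isUnit_det _).mp hA.isUnit
  have hBd : IsUnit (X * Xᵀ + l • (1 : Matrix (Fin n) (Fin n) ℝ)).det :=
    (Matrix.isUnit_iff_isUnit_det _).mp hB.isUnit
  set A := Xᵀ * X + l • (1 : Matrix (Fin p) (Fin p) ℝ)
  set B := X * Xᵀ + l • (1 : Matrix (Fin n) (Fin n) ℝ)
  have key : B * X = X * A := by
    simp only [A, B, Matrix.add_mul, Matrix.mul_add, Matrix.smul_mul, Matrix.mul_smul,
      one_mul, mul_one, Matrix.one_mul, Matrix.mul_one, Matrix.mul_assoc]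
  have key2 : X * A⁻¹ = B⁻¹ * X := by
    calc X * A⁻¹ = B⁻¹ * B * X * A⁻¹ := by
          rw [Matrix.nonsing_inv_mul _ hBd, Matrix.one_mul]
      _ = B⁻¹ * (B * X) * A⁻¹ := by rw [Matrix.mul_assoc B⁻¹ B X]
      _ = B⁻¹ * (X * A) * A⁻¹ := by rw [key]
      _ = B⁻¹ * X * (A * A⁻¹) := by rw [← Matrix.mul_assoc, Matrix.mul_assoc (B⁻¹ * X)]
      _ = B⁻¹ * X := by rw [Matrix.mul_nonsing_inv _ hAd, Matrix.mul_one]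
  rw [key2, Matrix.mul_assoc]

/-- **Proposition 1 (case `c = ∞`).** If `p⁻¹XₚXₚᵀ → τ²Iₙ` entrywise and `pνₚ² → ∞`,
then the Bayesian hat matrix `H⁽ᵖ⁾` converges entrywise to the identity; in
particular each leverage `H⁽ᵖ⁾ᵢᵢ → 1`. -/
theorem bayesian_leverage_limit_infinite_c
    (n : ℕ) (τ σ : ℝ) (hτ : 0 < τ) (hσ : 0 < σ)
    (X : (p : ℕ) → Matrix (Fin n) (Fin p) ℝ)
    (hX : ∀ a b, Tendsto (fun (p : ℕ) => (p : ℝ)⁻¹ * (X p * (X p)ᵀ) a b) atTop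
      (𝓝 ((τ ^ 2 • (1 : Matrix (Fin n) (Fin n) ℝ)) a b)))
    (ν : ℕ → ℝ) (hν : ∀ p, 0 < ν p)
    (hνc : Tendsto (fun (p : ℕ) => (p : ℝ) * (ν p) ^ 2) atTop atTop) :
    (∀ a b, Tendsto (fun (p : ℕ) =>
        (X p * ((X p)ᵀ * X p + (σ ^ 2 / (ν p) ^ 2) • (1 : Matrix (Fin p) (Fin p) ℝ))⁻¹
          * (X p)ᵀ) a b)
      atTop (𝓝 ((1 : Matrix (Fin n) (Fin n) ℝ) a b))) ∧
    (∀ i, Tendsto (fun (p : ℕ) =>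
        (X p * ((X p)ᵀ * X p + (σ ^ 2 / (ν p) ^ 2) • (1 : Matrix (Fin p) (Fin p) ℝ))⁻¹
          * (X p)ᵀ) i i)
      atTop (𝓝 (1 : ℝ))) := by
  have hτ2 : (0:ℝ) < τ ^ 2 := by positivity
  -- scaled Gram matrix and vanishing ridge
  set M : ℕ → Matrix (Fin n) (Fin n) ℝ := fun p => (p : ℝ)⁻¹ • (X p * (X p)ᵀ) with hMdef
  set d : ℕ → ℝ := fun p => σ ^ 2 / ((p : ℝ) * (ν p) ^ 2) with hddef
  have hM : Tendsto M atTop (𝓝 (τ ^ 2 • (1 : Matrix (Fin n) (Fin n) ℝ))) := by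
    refine tendsto_pi_nhds.mpr ?_
    intro a
    rw [tendsto_pi_nhds]
    intro b
    simpa [hMdef, Matrix.smul_apply, smul_eq_mul] using hX a b
  have hd : Tendsto d atTop (𝓝 0) := tendsto_const_nhds.div_atTop hνc
  have hsum : Tendsto (fun p => M p + d p • (1 : Matrix (Fin n) (Fin n) ℝ)) atTop
      (𝓝 (τ ^ 2 • (1 : Matrix (Fin n) (Fin n) ℝ))) := by
    have := hM.add (hd.smul_const (1 : Matrix (Fin n) (Fin n) ℝ))
    simpa using this
  have hdet : IsUnit (τ ^ 2 • (1 : Matrix (Fin n) (Fin n) ℝ)).det := by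
    have : (τ ^ 2 • (1 : Matrix (Fin n) (Fin n) ℝ)).det = (τ ^ 2) ^ n := by
      simp [Matrix.det_smul]
    rw [this]
    exact (pow_ne_zero n hτ2.ne').isUnit
  have hinv : Tendsto (fun p => (M p + d p • (1 : Matrix (Fin n) (Fin n) ℝ))⁻¹) atTop
      (𝓝 (τ ^ 2 • (1 : Matrix (Fin n) (Fin n) ℝ))⁻¹) := by
    refine (Filter.Tendsto.comp ?_ hsum)
    refine (continuousAt_matrix_inv _ ?_).tendsto
    obtain ⟨u, hu⟩ := hdet
    rw [← hu]
    exact NormedRing.inverse_continuousAt u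
  have hF : Tendsto (fun p => (M p + d p • (1 : Matrix (Fin n) (Fin n) ℝ))⁻¹ * M p) atTop
      (𝓝 (1 : Matrix (Fin n) (Fin n) ℝ)) := by
    have := hinv.mul hM
    rwa [Matrix.nonsing_inv_mul _ hdet] at this
  -- eventual equality of the hat matrix with the rescaled expression
  have hev : ∀ᶠ p in atTop, (fun (p : ℕ) =>
        X p * ((X p)ᵀ * X p + (σ ^ 2 / (ν p) ^ 2) • (1 : Matrix (Fin p) (Fin p) ℝ))⁻¹
          * (X p)ᵀ) p
      = (M p + d p • (1 : Matrix (Fin n) (Fin n) ℝ))⁻¹ * M p := by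
    filter_upwards [eventually_ge_atTop 1] with p hp
    have hp0 : ((p : ℝ)) ≠ 0 := Nat.cast_ne_zero.mpr (by omega)
    have hc : (0:ℝ) < σ ^ 2 / (ν p) ^ 2 := div_pos (pow_pos hσ 2) (pow_pos (hν p) 2)
    rw [pushthrough (X p) hc]
    set c := σ ^ 2 / (ν p) ^ 2 with hcdef
    set B := X p * (X p)ᵀ + c • (1 : Matrix (Fin n) (Fin n) ℝ) with hBdef
    have hBd : IsUnit B.det := by
      have hB : B.PosDef := by
        rw [hBdef]
        have hXt : (X p)ᵀ = (X p)ᴴ := by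
          ext i j; simp [Matrix.conjTranspose_apply]
        rw [hXt]
        exact Matrix.PosDef.posSemidef_add
          (Matrix.posSemidef_self_mul_conjTranspose (X p)) (smul_one_posDef hc)
      exact (Matrix.isUnit_iff_isUnit_det _).mp hB.isUnit
    have hMB : M p + d p • (1 : Matrix (Fin n) (Fin n) ℝ) = (p : ℝ)⁻¹ • B := by
      rw [hBdef, smul_add, hMdef]
      congr 1
      rw [smul_smul]
      have hdc : d p = (p : ℝ)⁻¹ * c := by
        rw [hddef, hcdef, inv_mul_eq_div, div_div, mul_comm]
      rw [hdc]
    have : Invertible ((p:ℝ)⁻¹) := invertibleOfNonzero (inv_ne_zero hp0)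
    rw [hMB, Matrix.inv_smul B ((p:ℝ)⁻¹) hBd, invOf_eq_inv, inv_inv]
    simp only [hMdef]
    rw [Matrix.smul_mul, Matrix.mul_smul, smul_smul, mul_inv_cancel₀ hp0, one_smul]
  constructor
  · intro a b
    have hFab : Tendsto (fun p => ((M p + d p • (1 : Matrix (Fin n) (Fin n) ℝ))⁻¹ * M p) a b)
        atTop (𝓝 ((1 : Matrix (Fin n) (Fin n) ℝ) a b)) :=
      tendsto_pi_nhds.mp (tendsto_pi_nhds.mp hF a) b
    refine hFab.congr' ?_
    filter_upwards [hev] with p hp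
    rw [hp]
  · intro i
    have hFab : Tendsto (fun p => ((M p + d p • (1 : Matrix (Fin n) (Fin n) ℝ))⁻¹ * M p) i i)
        atTop (𝓝 ((1 : Matrix (Fin n) (Fin n) ℝ) i i)) :=
      tendsto_pi_nhds.mp (tendsto_pi_nhds.mp hF i) i
    have h1 : ((1 : Matrix (Fin n) (Fin n) ℝ) i i) = 1 := by simp
    rw [h1] at hFab
    refine hFab.congr' ?_
    filter_upwards [hev] with p hp
    rw [hp]
end

section
/- Fix n ≥ 2, c > 0, and i ∈ {1,…,n}. Let g₁,…,gₙ : ℝ → [0,∞) be bounded measurable functions with ∫_ℝ gⱼ(t) φ_c(t) dt > 0 for every j ≠ i, where φ_c(t) = (2πc)^{-1/2} exp(−t²/(2c)). Let (A_p)_{p≥1} be symmetric positive definite n×n real matrices with A_p → c I_n entrywise, and (B_p)_{p≥1} symmetric positive definite (n−1)×(n−1) real matrices with B_p → c I_{n−1} entrywise. For a symmetric positive definite m×m matrix A, let φ_A(η) = (2π)^{-m/2}(det A)^{-1/2} exp(−½ ηᵀA^{-1}η); integrals are with respect to Lebesgue measure. Then, as p → ∞, [∫_{ℝⁿ} ∏_{j=1}^n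 gⱼ(ηⱼ) φ_{A_p}(η) dη] / [∫_{ℝ^{n−1}} ∏_{j≠i} gⱼ(ηⱼ) φ_{B_p}(η₋ᵢ) dη₋ᵢ] → ∫_ℝ gᵢ(t) φ_c(t) dt, the denominators being strictly positive for all large p. -/
open MeasureTheory Matrix Filter Topology

/-- The centered Gaussian density on `ℝᵐ` with covariance matrix `A`. -/
noncomputable def gaussDensity {m : ℕ} (A : Matrix (Fin m) (Fin m) ℝ)
    (η : Fin m → ℝ) : ℝ :=
  (Real.sqrt ((2 * Real.pi) ^ m * A.det))⁻¹ * Real.exp (-(η ⬝ᵥ A⁻¹.mulVec η) / 2)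

/-- The centered univariate Gaussian density with variance `c`. -/
noncomputable def gauss1 (c t : ℝ) : ℝ :=
  (Real.sqrt (2 * Real.pi * c))⁻¹ * Real.exp (-(t ^ 2) / (2 * c))

lemma gaussDensity_nonneg {n : ℕ} (A : Matrix (Fin n) (Fin n) ℝ) (η : Fin n → ℝ) :
    0 ≤ gaussDensity A η := by
  unfold gaussDensity; positivity

lemma gaussDensity_measurable {n : ℕ} (A : Matrix (Fin n) (Fin n) ℝ) :
    Measurable (gaussDensity A) := by
  unfold gaussDensity
  exact (Real.measurable_exp.comp
    ((((continuous_id.dotProduct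
      (continuous_const.matrix_mulVec continuous_id)).neg).div_const 2).measurable)).const_mul _

lemma sqrt_pow_eq {x : ℝ} (h : 0 ≤ x) (n : ℕ) : Real.sqrt (x ^ n) = Real.sqrt x ^ n := by
  rw [show x ^ n = (Real.sqrt x ^ 2) ^ n by rw [Real.sq_sqrt h], ← pow_mul, mul_comm, pow_mul,
    Real.sqrt_sq (by positivity)]

lemma smul_one_inv {n : ℕ} {c : ℝ} (hc : 0 < c) :
    (c • (1 : Matrix (Fin n) (Fin n) ℝ))⁻¹ = c⁻¹ • 1 :=
  Matrix.inv_eq_right_inv (by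
    rw [smul_mul_smul_comm, mul_one, mul_inv_cancel₀ hc.ne', one_smul])

lemma quad_smul_one {n : ℕ} (c : ℝ) (η : Fin n → ℝ) :
    η ⬝ᵥ (c • (1 : Matrix (Fin n) (Fin n) ℝ)).mulVec η = c * ∑ j, η j ^ 2 := by
  rw [Matrix.smul_mulVec, Matrix.one_mulVec, dotProduct_smul]
  simp [dotProduct, Finset.mul_sum, sq]

/-- The Gaussian density with covariance `c • 1` factorizes. -/
lemma gaussDensity_smul_one {n : ℕ} {c : ℝ} (hc : 0 < c) (η : Fin n → ℝ) :
    gaussDensity (c • (1 : Matrix (Fin n) (Fin n) ℝ)) η = ∏ j, gauss1 c (η j) := by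
  unfold gaussDensity gauss1
  have hdet : (c • (1 : Matrix (Fin n) (Fin n) ℝ)).det = c ^ n := by simp [Matrix.det_smul]
  rw [smul_one_inv hc, quad_smul_one, Finset.prod_mul_distrib, Finset.prod_const,
    ← Real.exp_sum, Finset.card_univ, Fintype.card_fin, hdet, ← mul_pow,
    sqrt_pow_eq (by positivity), ← inv_pow]
  congr 1
  congr 1
  rw [← Finset.sum_div, Finset.sum_neg_distrib, div_eq_div_iff (by norm_num) (by positivity)]
  field_simp

lemma quad_lower {n : ℕ} {c δ : ℝ} (hc : 0 < c) (hδ : 0 ≤ δ) (M : Matrix (Fin n) (Fin n) ℝ)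
    (hE : ∀ a b, |M a b - (c⁻¹ • (1 : Matrix (Fin n) (Fin n) ℝ)) a b| ≤ δ) (η : Fin n → ℝ) :
    c⁻¹ * (∑ j, η j ^ 2) - δ * ((n : ℝ) * ∑ j, η j ^ 2) ≤ η ⬝ᵥ M.mulVec η := by
  have hQ : η ⬝ᵥ M.mulVec η = ∑ a, ∑ b, η a * M a b * η b := by
    simp [dotProduct, mulVec, Finset.mul_sum, mul_assoc]
  have key : ∀ a b, (if a = b then c⁻¹ * η a ^ 2 else 0) - δ * (|η a| * |η b|)
      ≤ η a * M a b * η b := by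
    intro a b
    have h1 : |η a * (M a b - (c⁻¹ • (1 : Matrix (Fin n) (Fin n) ℝ)) a b) * η b|
        ≤ δ * (|η a| * |η b|) := by
      rw [abs_mul, abs_mul]
      calc |η a| * |M a b - (c⁻¹ • (1 : Matrix (Fin n) (Fin n) ℝ)) a b| * |η b|
          ≤ |η a| * δ * |η b| := by
            apply mul_le_mul_of_nonneg_right _ (abs_nonneg _)
            exact mul_le_mul_of_nonneg_left (hE a b) (abs_nonneg _)
        _ = δ * (|η a| * |η b|) := by ring
    have h2 := neg_abs_le (η a * (M a b - (c⁻¹ • (1 : Matrix (Fin n) (Fin n) ℝ)) a b) * η b)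
    have h3 : η a * ((c⁻¹ • (1 : Matrix (Fin n) (Fin n) ℝ)) a b) * η b
        = if a = b then c⁻¹ * η a ^ 2 else 0 := by
      by_cases h : a = b <;> simp [Matrix.smul_apply, Matrix.one_apply, h] <;> ring
    nlinarith [neg_le_of_abs_le h1]
  calc c⁻¹ * (∑ j, η j ^ 2) - δ * ((n : ℝ) * ∑ j, η j ^ 2)
      ≤ c⁻¹ * (∑ j, η j ^ 2) - δ * ((∑ j, |η j|) * (∑ j, |η j|)) := by
        have h4 : (∑ j, |η j|) * (∑ j, |η j|) ≤ (n : ℝ) * ∑ j, η j ^ 2 := by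
          have := sq_sum_le_card_mul_sum_sq (s := Finset.univ) (f := fun j => |η j|)
          simp only [Finset.card_univ, Fintype.card_fin, sq_abs] at this
          calc (∑ j, |η j|) * (∑ j, |η j|) = (∑ j, |η j|) ^ 2 := by ring
            _ ≤ (n : ℝ) * ∑ j, η j ^ 2 := this
        nlinarith [h4, hδ]
    _ = ∑ a, ∑ b, ((if a = b then c⁻¹ * η a ^ 2 else 0) - δ * (|η a| * |η b|)) := by
        have h6 : ∑ a, ∑ b : Fin n, (if a = b then c⁻¹ * η a ^ 2 else 0)
            = c⁻¹ * ∑ j, η j ^ 2 := by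
          simp [Finset.mul_sum]
        have h5 : ∑ a, ∑ b, δ * (|η a| * |η b|)
            = δ * ((∑ j, |η j|) * (∑ j, |η j|)) := by
          simp_rw [← Finset.mul_sum]
          rw [← Finset.sum_mul]
        simp_rw [Finset.sum_sub_distrib]
        rw [h6, h5]
    _ ≤ ∑ a, ∑ b, η a * M a b * η b := by
        apply Finset.sum_le_sum; intro a _; apply Finset.sum_le_sum; intro b _; exact key a b
    _ = η ⬝ᵥ M.mulVec η := hQ.symm

lemma tendsto_integral_gaussDensity {n : ℕ} {c : ℝ} (hc : 0 < c)
    {f : (Fin n → ℝ) → ℝ} (hfm : Measurable f) (hf0 : ∀ η, 0 ≤ f η)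
    {M : ℝ} (hfM : ∀ η, f η ≤ M)
    (A : ℕ → Matrix (Fin n) (Fin n) ℝ)
    (hAc : ∀ a b, Tendsto (fun p => A p a b) atTop
      (𝓝 ((c • (1 : Matrix (Fin n) (Fin n) ℝ)) a b))) :
    Tendsto (fun p => ∫ η : Fin n → ℝ, f η * gaussDensity (A p) η) atTop
      (𝓝 (∫ η : Fin n → ℝ, f η * gaussDensity (c • 1) η)) := by
  set C := (c • (1 : Matrix (Fin n) (Fin n) ℝ)) with hC
  have hM0 : 0 ≤ M := le_trans (hf0 (fun _ => 0)) (hfM _)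
  have hAt : Tendsto A atTop (𝓝 C) :=
    tendsto_pi_nhds.2 fun a => tendsto_pi_nhds.2 fun b => hAc a b
  have hCdet : C.det = c ^ n := by simp [hC, Matrix.det_smul]
  have hdet : Tendsto (fun p => (A p).det) atTop (𝓝 (c ^ n)) := by
    rw [← hCdet]
    exact ((continuous_id.matrix_det).tendsto C).comp hAt
  have hCinv : C⁻¹ = c⁻¹ • 1 := smul_one_inv hc
  have hinv : Tendsto (fun p => (A p)⁻¹) atTop (𝓝 (c⁻¹ • 1)) := by
    rw [← hCinv]
    refine ((continuousAt_matrix_inv C ?_).tendsto).comp hAt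
    rw [Ring.inverse_eq_inv']
    exact continuousAt_inv₀ (by rw [hCdet]; exact (pow_pos hc n).ne')
  have hinvab : ∀ a b, Tendsto (fun p => (A p)⁻¹ a b) atTop
      (𝓝 ((c⁻¹ • (1 : Matrix (Fin n) (Fin n) ℝ)) a b)) := fun a b =>
    tendsto_pi_nhds.1 (tendsto_pi_nhds.1 hinv a) b
  set δ : ℝ := c⁻¹ / (2 * (n + 1)) with hδdef
  have hδ : 0 < δ := by positivity
  have hEb : ∀ᶠ p in atTop, ∀ a b,
      |(A p)⁻¹ a b - (c⁻¹ • (1 : Matrix (Fin n) (Fin n) ℝ)) a b| ≤ δ := by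
    rw [eventually_all]
    intro a
    rw [eventually_all]
    intro b
    have := Metric.tendsto_nhds.1 (hinvab a b) δ hδ
    exact this.mono fun p hp => by rw [Real.dist_eq] at hp; exact hp.le
  have hdetb : ∀ᶠ p in atTop, c ^ n / 2 ≤ (A p).det :=
    hdet.eventually (eventually_ge_nhds (half_lt_self (pow_pos hc n)))
  set K : ℝ := (Real.sqrt ((2 * Real.pi) ^ n * (c ^ n / 2)))⁻¹ with hKdef
  have hKpos : 0 < K := by positivity
  have hδn : δ * (n : ℝ) ≤ c⁻¹ / 2 := by
    rw [hδdef, div_mul_eq_mul_div, div_le_div_iff₀ (by positivity) (by norm_num)]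
    have : (n : ℝ) ≤ n + 1 := by linarith
    nlinarith [inv_pos.2 hc]
  apply tendsto_integral_filter_of_dominated_convergence
    (bound := fun η => (M * K) * ∏ j, Real.exp (-(c⁻¹ / 4) * (η j) ^ 2))
  · exact Eventually.of_forall fun p =>
      (hfm.mul (gaussDensity_measurable _)).aestronglyMeasurable
  · filter_upwards [hEb, hdetb] with p hE hdetp
    apply ae_of_all
    intro η
    rw [Real.norm_eq_abs, abs_of_nonneg (mul_nonneg (hf0 η) (gaussDensity_nonneg _ _))]
    have hS : (0:ℝ) ≤ ∑ j, η j ^ 2 := Finset.sum_nonneg fun j _ => sq_nonneg _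
    have hquad : c⁻¹ / 2 * ∑ j, η j ^ 2 ≤ η ⬝ᵥ (A p)⁻¹.mulVec η := by
      have h1 := quad_lower hc hδ.le (A p)⁻¹ hE η
      have h2 : δ * ((n : ℝ) * ∑ j, η j ^ 2) ≤ c⁻¹ / 2 * ∑ j, η j ^ 2 := by
        rw [← mul_assoc]
        exact mul_le_mul_of_nonneg_right hδn hS
      linarith
    have hgauss : gaussDensity (A p) η ≤ K * ∏ j, Real.exp (-(c⁻¹ / 4) * (η j) ^ 2) := by
      unfold gaussDensity
      have hnorm : (Real.sqrt ((2 * Real.pi) ^ n * (A p).det))⁻¹ ≤ K := by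
        rw [hKdef]
        apply inv_anti₀ (by positivity)
        apply Real.sqrt_le_sqrt
        exact mul_le_mul_of_nonneg_left hdetp (by positivity)
      have hexp : Real.exp (-(η ⬝ᵥ (A p)⁻¹.mulVec η) / 2)
          ≤ ∏ j, Real.exp (-(c⁻¹ / 4) * (η j) ^ 2) := by
        rw [← Real.exp_sum]
        apply Real.exp_le_exp.2
        have : ∑ j, -(c⁻¹ / 4) * (η j) ^ 2 = -(c⁻¹ / 2 * ∑ j, η j ^ 2) / 2 := by
          rw [← Finset.mul_sum]
          ring
        rw [this]
        have := hquad
        linarith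
      exact mul_le_mul hnorm hexp (Real.exp_nonneg _) hKpos.le
    exact le_trans (mul_le_mul (hfM η) hgauss (gaussDensity_nonneg _ _) hM0)
      (le_of_eq (by ring))
  · have hbint : Integrable (fun η : Fin n → ℝ => ∏ j, Real.exp (-(c⁻¹ / 4) * (η j) ^ 2)) :=
      Integrable.fintype_prod (f := fun (_ : Fin n) (t : ℝ) => Real.exp (-(c⁻¹ / 4) * t ^ 2))
        (fun _ => by simpa [neg_mul] using integrable_exp_neg_mul_sq (by positivity : (0:ℝ) < c⁻¹ / 4))
    exact hbint.const_mul _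
  · apply ae_of_all
    intro η
    have h1 : Tendsto (fun p => (Real.sqrt ((2 * Real.pi) ^ n * (A p).det))⁻¹) atTop
        (𝓝 ((Real.sqrt ((2 * Real.pi) ^ n * C.det))⁻¹)) := by
      apply Tendsto.inv₀
      · rw [hCdet]
        exact (Real.continuous_sqrt.tendsto _).comp (tendsto_const_nhds.mul hdet)
      · rw [hCdet]
        positivity
    have h2 : Tendsto (fun p => η ⬝ᵥ (A p)⁻¹.mulVec η) atTop
        (𝓝 (η ⬝ᵥ C⁻¹.mulVec η)) := by
      rw [hCinv]
      exact ((continuous_const.dotProduct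
        (continuous_id.matrix_mulVec continuous_const)).tendsto _).comp hinv
    unfold gaussDensity
    exact tendsto_const_nhds.mul
      (h1.mul ((Real.continuous_exp.tendsto _).comp ((h2.neg).div_const 2)))

lemma integral_prod_gaussDensity {n : ℕ} {c : ℝ} (hc : 0 < c) (g : Fin n → ℝ → ℝ) :
    ∫ η : Fin n → ℝ, (∏ j, g j (η j)) * gaussDensity (c • 1) η
      = ∏ j, ∫ t : ℝ, g j t * gauss1 c t := by
  have h : ∀ η : Fin n → ℝ, (∏ j, g j (η j)) * gaussDensity (c • 1) η
      = ∏ j, (g j (η j) * gauss1 c (η j)) := fun η => by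
    rw [gaussDensity_smul_one hc, ← Finset.prod_mul_distrib]
  simp_rw [h]
  exact MeasureTheory.integral_fintype_prod_eq_prod (fun j t => g j t * gauss1 c t)

lemma tendsto_num {n : ℕ} {c : ℝ} (hc : 0 < c) (g : Fin n → ℝ → ℝ)
    (hgm : ∀ j, Measurable (g j)) (hg0 : ∀ j t, 0 ≤ g j t)
    (hgb : ∀ j, ∃ B, ∀ t, g j t ≤ B)
    (A : ℕ → Matrix (Fin n) (Fin n) ℝ)
    (hAc : ∀ a b, Tendsto (fun p => A p a b) atTop
      (𝓝 ((c • (1 : Matrix (Fin n) (Fin n) ℝ)) a b))) :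
    Tendsto (fun p => ∫ η : Fin n → ℝ, (∏ j, g j (η j)) * gaussDensity (A p) η) atTop
      (𝓝 (∏ j, ∫ t : ℝ, g j t * gauss1 c t)) := by
  rw [← integral_prod_gaussDensity hc g]
  choose Bd hBd using hgb
  exact tendsto_integral_gaussDensity hc
    (Finset.measurable_prod _ fun j _ => (hgm j).comp (measurable_pi_apply j))
    (fun η => Finset.prod_nonneg fun j _ => hg0 j _)
    (M := ∏ j, Bd j)
    (fun η => Finset.prod_le_prod (fun j _ => hg0 j _) (fun j _ => hBd j _)) A hAc

/-- **Equation (eq:py_finite) of Theorem 4.** With `n = m + 1 ≥ 2` observations, if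
`Aₚ → cIₙ` and `Bₚ → cI_{n−1}` entrywise, the ratio of the full to the leave-one-out
Gaussian product integrals converges to `∫ gᵢ φ_c`, the denominators being eventually
strictly positive. -/
theorem loo_predictive_density_limit
    (m : ℕ) (hm : 1 ≤ m) (c : ℝ) (hc : 0 < c) (i : Fin (m + 1))
    (g : Fin (m + 1) → ℝ → ℝ)
    (hgm : ∀ j, Measurable (g j)) (hg0 : ∀ j t, 0 ≤ g j t)
    (hgb : ∀ j, ∃ B, ∀ t, g j t ≤ B)
    (hgpos : ∀ j, j ≠ i → 0 < ∫ t : ℝ, g j t * gauss1 c t)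
    (A : ℕ → Matrix (Fin (m + 1)) (Fin (m + 1)) ℝ) (hA : ∀ p, (A p).PosDef)
    (hAc : ∀ a b, Tendsto (fun p => A p a b) atTop
      (𝓝 ((c • (1 : Matrix (Fin (m + 1)) (Fin (m + 1)) ℝ)) a b)))
    (B : ℕ → Matrix (Fin m) (Fin m) ℝ) (hB : ∀ p, (B p).PosDef)
    (hBc : ∀ a b, Tendsto (fun p => B p a b) atTop
      (𝓝 ((c • (1 : Matrix (Fin m) (Fin m) ℝ)) a b))) :
    Tendsto (fun p =>
        (∫ η : Fin (m + 1) → ℝ, (∏ j, g j (η j)) * gaussDensity (A p) η) /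
        (∫ η : Fin m → ℝ, (∏ k, g (i.succAbove k) (η k)) * gaussDensity (B p) η))
      atTop (𝓝 (∫ t : ℝ, g i t * gauss1 c t)) ∧
    (∀ᶠ p in atTop,
      0 < ∫ η : Fin m → ℝ, (∏ k, g (i.succAbove k) (η k)) * gaussDensity (B p) η) := by
  have hnum := tendsto_num hc g hgm hg0 hgb A hAc
  have hden := tendsto_num hc (fun k => g (i.succAbove k)) (fun k => hgm _)
    (fun k t => hg0 _ t) (fun k => hgb _) B hBc
  set D : ℝ := ∏ k : Fin m, ∫ t : ℝ, g (i.succAbove k) t * gauss1 c t with hDdef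
  have hD : 0 < D := Finset.prod_pos fun k _ => hgpos _ (Fin.succAbove_ne i k)
  have hsplit : ∏ j, ∫ t : ℝ, g j t * gauss1 c t
      = (∫ t : ℝ, g i t * gauss1 c t) * D :=
    Fin.prod_univ_succAbove (fun j => ∫ t : ℝ, g j t * gauss1 c t) i
  constructor
  · have := hnum.div hden hD.ne'
    rw [hsplit, mul_div_cancel_right₀ _ hD.ne'] at this
    exact this
  · exact hden.eventually (eventually_gt_nhds hD)
end
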